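/- Let k be a commutative semiring, and let (X, 0, f) and (Y, 0, g) be pointed modules with smash structure map h on X × Y. Define adjacency matrices A : Matrix {x : X // x ≠ 0} {x : X // x ≠ 0} k by A x x' = 1 if f x' = x and 0 otherwise, B analogously for g, and C : Matrix ({x // x ≠ 0} × {y // y ≠ 0}) ({x // x ≠ 0} × {y // y ≠ 0}) k by C (x, y) (x', y') = 1 if h (x', y') = (x, y) and 0 otherwise. Then C equals the Kronecker product of A and B: for all indices, C (x, y) (x', y') = A x x' * B y y'. (Adj(Γ_{M ∧ N}) = Adj(Γ_M) ⊗ Adj(Γ_N), i.e. Γ_{M ∧ N} is the tensor product graph Γ_M ⊗ Γ_N.) -/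
import Mathlib

/-- **Proposition (`Γ_{M ∧ N}` is the tensor product graph `Γ_M ⊗ Γ_N`).**
Let `(X, 0, f)` and `(Y, 0, g)` be pointed modules with smash structure map `h`
on `X × Y`, and let `A`, `B`, `C` be the adjacency matrices (over a commutative
semiring `k`) of the graphs of `(X, 0, f)`, `(Y, 0, g)` and of the smash product,
indexed by nonzero elements.  Then `C` is the Kronecker product of `A` and `B`:
`Adj(Γ_{M ∧ N}) = Adj(Γ_M) ⊗ Adj(Γ_N)`. -/
theorem smash_adjacency_kronecker {k X Y : Type*} [CommSemiring k]
    [Zero X] [Zero Y] [DecidableEq X] [DecidableEq Y]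
    (f : X → X) (g : Y → Y) (hf : f 0 = 0) (hg : g 0 = 0)
    (h : X × Y → X × Y)
    (hh : ∀ p : X × Y,
      h p = if f p.1 ≠ 0 ∧ g p.2 ≠ 0 then (f p.1, g p.2) else (0, 0))
    (A : Matrix {x : X // x ≠ 0} {x : X // x ≠ 0} k)
    (hA : ∀ x x' : {x : X // x ≠ 0}, A x x' = if f (x' : X) = (x : X) then 1 else 0)
    (B : Matrix {y : Y // y ≠ 0} {y : Y // y ≠ 0} k)
    (hB : ∀ y y' : {y : Y // y ≠ 0}, B y y' = if g (y' : Y) = (y : Y) then 1 else 0)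
    (C : Matrix ({x : X // x ≠ 0} × {y : Y // y ≠ 0})
          ({x : X // x ≠ 0} × {y : Y // y ≠ 0}) k)
    (hC : ∀ p q : {x : X // x ≠ 0} × {y : Y // y ≠ 0},
      C p q = if h ((q.1 : X), (q.2 : Y)) = ((p.1 : X), (p.2 : Y)) then 1 else 0) :
    C = Matrix.kroneckerMap (· * ·) A B := by
  ext ⟨x, y⟩ ⟨x', y'⟩
  rw [hC, Matrix.kroneckerMap_apply, hA, hB, hh]
  by_cases hfx : f (x' : X) = 0
  · have h1 : ¬ f (x' : X) = (x : X) := fun hc => x.2 (hc.symm.trans hfx)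
    simp only [hfx, ne_eq, not_true_eq_false, false_and, if_false, h1, Prod.mk.injEq]
    have hx0 : ¬ (0 : X) = (x : X) := fun hc => x.2 hc.symm
    simp [hx0]
  · by_cases hgy : g (y' : Y) = 0
    · have h2 : ¬ g (y' : Y) = (y : Y) := fun hc => y.2 (hc.symm.trans hgy)
      simp only [hgy, ne_eq, not_true_eq_false, and_false, if_false, h2, Prod.mk.injEq]
      have hy0 : ¬ (0 : Y) = (y : Y) := fun hc => y.2 hc.symm
      simp [hy0]
    · simp only [ne_eq, hfx, hgy, not_false_eq_true, and_self, if_true, Prod.mk.injEq]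
      by_cases h1 : f (x' : X) = (x : X) <;> by_cases h2 : g (y' : Y) = (y : Y) <;>
        simp [h1, h2]
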